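/- For every positive integer n there exists a rational number ε_n with 0 < ε_n < 1 such that for any hyperplanes X_1,…,X_{2n} in the Grassmannian of (n−1)-dimensional linear subspaces of ℝ^n, there exists a line P through the origin in ℝ^n such that for all hyperplanes Y_1,…,Y_{2n}, if δ(X_i, Y_i) < ε_n for each i, then δ(P, Y_i) > ε_n for each i. Here δ(V, W) for subspaces V, W of the same dimension is the operator norm ‖π_V − π_W‖ of the difference of orthogonal projections, and for a line P spanned by a unit vector v and a subspace X, δ(P, X) := |v − π_X(v)|. -/

import Mathlib

open MeasureTheory Set ENNReal
noncomputable section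

abbrev E (n : ℕ) := EuclideanSpace ℝ (Fin n)

/-- The inclusion-composed orthogonal projection onto a subspace. -/
def projL {n : ℕ} (V : Submodule ℝ (E n)) : E n →L[ℝ] E n :=
  V.subtypeL.comp (Submodule.orthogonalProjection V)

/-- δ(V,W) := ‖π_V − π_W‖ (operator norm). -/
def delta {n : ℕ} (V W : Submodule ℝ (E n)) : ℝ := ‖projL V - projL W‖

/-- δ(P,X) := |v − π_X(v)| for a line P spanned by the unit vector v. -/
def deltaLine {n : ℕ} (v : E n) (X : Submodule ℝ (E n)) : ℝ := ‖v - projL X v‖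

/-- moment curve points -/
def mom (n : ℕ) {N : ℕ} (t : Fin N) : E n := WithLp.toLp 2 (fun j => ((t : ℕ) : ℝ) ^ (j : ℕ))

lemma inner_mom {n N : ℕ} (u : E n) (t : Fin N) :
    (inner ℝ u (mom n t) : ℝ) = ∑ j : Fin n, u j * ((t : ℕ) : ℝ) ^ (j : ℕ) := by
  simp [PiLp.inner_apply, mom, RCLike.inner_apply, mul_comm]

lemma card_zero_le {n N : ℕ} (hn : 0 < n) (u : E n) (hu : u ≠ 0) :
    (Finset.univ.filter
      (fun t : Fin N => ∑ j : Fin n, u j * ((t : ℕ) : ℝ) ^ (j : ℕ) = 0)).card ≤ n - 1 := by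
  classical
  set q : Polynomial ℝ := ∑ j : Fin n, Polynomial.monomial (j : ℕ) (u j) with hq
  obtain ⟨j₀, hj₀⟩ : ∃ j, u j ≠ 0 := by
    by_contra h; push_neg at h; exact hu (PiLp.ext (fun j => by simp [h j]))
  have hcoeff : q.coeff (j₀ : ℕ) = u j₀ := by
    rw [hq, Polynomial.finset_sum_coeff]
    rw [Finset.sum_eq_single j₀]
    · simp
    · intro b _ hb
      rw [Polynomial.coeff_monomial, if_neg (by simpa [Fin.val_inj] using hb)]
    · simp
  have hq0 : q ≠ 0 := fun h => hj₀ (by rw [← hcoeff, h, Polynomial.coeff_zero])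
  have hdeg : q.natDegree ≤ n - 1 := by
    apply Polynomial.natDegree_sum_le_of_forall_le
    intro j _
    exact le_trans (Polynomial.natDegree_monomial_le _) (by have := j.is_lt; omega)
  have heval : ∀ x : ℝ, q.eval x = ∑ j : Fin n, u j * x ^ (j : ℕ) := by
    intro x; rw [hq, Polynomial.eval_finset_sum]; simp [Polynomial.eval_monomial]
  calc (Finset.univ.filter
      (fun t : Fin N => ∑ j : Fin n, u j * ((t : ℕ) : ℝ) ^ (j : ℕ) = 0)).card
      ≤ q.roots.toFinset.card := by
        refine Finset.card_le_card_of_injOn (fun t => ((t : ℕ) : ℝ)) ?_ ?_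
        · intro t ht
          rw [Finset.mem_coe, Finset.mem_filter] at ht
          rw [Finset.mem_coe, Multiset.mem_toFinset, Polynomial.mem_roots hq0]
          rw [Polynomial.IsRoot, heval]; exact ht.2
        · intro a _ b _ h
          exact Fin.val_injective (Nat.cast_injective h)
    _ ≤ Multiset.card q.roots := q.roots.toFinset_card_le
    _ ≤ q.natDegree := q.card_roots'
    _ ≤ n - 1 := hdeg

/-- the sum-of-products function -/
def gfun (n : ℕ) (u : Fin (2 * n) → E n) : ℝ :=
  ∑ t : Fin (2 * n * (n - 1) + 1), ∏ i : Fin (2 * n),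
    (∑ j : Fin n, u i j * ((t : ℕ) : ℝ) ^ (j : ℕ)) ^ 2

lemma gfun_continuous (n : ℕ) : Continuous (gfun n) := by
  apply continuous_finset_sum
  intro t _
  apply continuous_finset_prod
  intro i _
  apply Continuous.pow
  apply continuous_finset_sum
  intro j _
  exact (((EuclideanSpace.proj j).continuous.comp (continuous_apply i)).mul continuous_const)

lemma gfun_pos {n : ℕ} (hn : 0 < n) (u : Fin (2 * n) → E n) (hu : ∀ i, u i ≠ 0) :
    0 < gfun n u := by
  classical
  set N := 2 * n * (n - 1) + 1
  set B : Finset (Fin N) := Finset.univ.biUnion (fun i : Fin (2 * n) =>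
    Finset.univ.filter (fun t : Fin N => ∑ j : Fin n, u i j * ((t : ℕ) : ℝ) ^ (j : ℕ) = 0))
  have hBcard : B.card < N := by
    calc B.card ≤ ∑ i : Fin (2 * n), (Finset.univ.filter
          (fun t : Fin N => ∑ j : Fin n, u i j * ((t : ℕ) : ℝ) ^ (j : ℕ) = 0)).card :=
        Finset.card_biUnion_le
      _ ≤ ∑ _i : Fin (2 * n), (n - 1) := Finset.sum_le_sum (fun i _ => card_zero_le hn _ (hu i))
      _ = 2 * n * (n - 1) := by simp [mul_comm]
      _ < N := Nat.lt_succ_self _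
  have hBne : B ≠ Finset.univ := by
    intro h
    rw [h, Finset.card_univ, Fintype.card_fin] at hBcard
    omega
  obtain ⟨t, ht⟩ : ∃ t : Fin N, t ∉ B := by
    by_contra h; push_neg at h
    exact hBne (Finset.eq_univ_iff_forall.mpr h)
  have htgood : ∀ i, ∑ j : Fin n, u i j * ((t : ℕ) : ℝ) ^ (j : ℕ) ≠ 0 := by
    intro i hi
    exact ht (Finset.mem_biUnion.mpr ⟨i, Finset.mem_univ _, Finset.mem_filter.mpr ⟨Finset.mem_univ _, hi⟩⟩)
  have hterm : 0 < ∏ i : Fin (2 * n),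
      (∑ j : Fin n, u i j * ((t : ℕ) : ℝ) ^ (j : ℕ)) ^ 2 :=
    Finset.prod_pos (fun i _ => sq_pos_of_ne_zero (htgood i))
  have : 0 < gfun n u := by
    refine lt_of_lt_of_le hterm ?_
    exact Finset.single_le_sum (f := fun t : Fin N => ∏ i : Fin (2 * n),
      (∑ j : Fin n, u i j * ((t : ℕ) : ℝ) ^ (j : ℕ)) ^ 2)
      (fun t _ => Finset.prod_nonneg (fun i _ => sq_nonneg _)) (Finset.mem_univ t)
  exact this


lemma core (n : ℕ) (hn : 0 < n) :
    ∃ c : ℝ, 0 < c ∧ ∀ u : Fin (2 * n) → E n, (∀ i, ‖u i‖ = 1) →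
      ∃ v : E n, ‖v‖ = 1 ∧ ∀ i, c ≤ |(inner ℝ (u i) v : ℝ)| := by
  classical
  set N := 2 * n * (n - 1) + 1 with hN
  set K : Set (Fin (2 * n) → E n) := Set.univ.pi (fun _ => Metric.sphere (0 : E n) 1) with hK
  have hKmem : ∀ u, u ∈ K ↔ ∀ i, ‖u i‖ = 1 := by
    intro u
    simp [hK, Set.mem_univ_pi, mem_sphere_zero_iff_norm]
  have hKc : IsCompact K := isCompact_univ_pi (fun _ => isCompact_sphere _ _)
  have hKne : K.Nonempty := by
    refine ⟨fun _ => EuclideanSpace.single (⟨0, hn⟩ : Fin n) (1 : ℝ), ?_⟩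
    rw [hKmem]
    intro i
    rw [EuclideanSpace.norm_single]
    norm_num
  obtain ⟨u₀, hu₀K, hmin⟩ := hKc.exists_isMinOn hKne (gfun_continuous n).continuousOn
  set c₀ := gfun n u₀ with hc₀def
  have hc₀ : 0 < c₀ := by
    apply gfun_pos hn
    intro i
    have := (hKmem u₀).mp hu₀K i
    intro h
    rw [h] at this
    simp at this
  set M : ℝ := 1 + ∑ t : Fin N, ‖mom n t‖ with hM
  have hM1 : (1 : ℝ) ≤ M := by
    rw [hM]
    have : 0 ≤ ∑ t : Fin N, ‖mom n t‖ := Finset.sum_nonneg (fun t _ => norm_nonneg _)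
    linarith
  have hM0 : 0 < M := lt_of_lt_of_le one_pos hM1
  have hMmom : ∀ t : Fin N, ‖mom n t‖ ≤ M := by
    intro t
    rw [hM]
    have h1 : ‖mom n t‖ ≤ ∑ t' : Fin N, ‖mom n t'‖ :=
      Finset.single_le_sum (fun t' _ => norm_nonneg _) (Finset.mem_univ t)
    linarith
  set d : ℝ := c₀ / N / M ^ (2 * (2 * n - 1)) with hd
  have hd0 : 0 < d := by
    apply div_pos (div_pos hc₀ (by positivity)) (by positivity)
  refine ⟨Real.sqrt d / M, by positivity, ?_⟩
  intro u hu
  have hgu : c₀ ≤ gfun n u := hmin ((hKmem u).mpr hu)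
  obtain ⟨t, -, ht⟩ : ∃ t ∈ (Finset.univ : Finset (Fin N)), c₀ / N ≤ ∏ i : Fin (2 * n),
      (∑ j : Fin n, u i j * ((t : ℕ) : ℝ) ^ (j : ℕ)) ^ 2 := by
    apply Finset.exists_le_of_sum_le Finset.univ_nonempty
    rw [Finset.sum_const, Finset.card_univ, Fintype.card_fin, nsmul_eq_mul]
    rw [mul_div_cancel₀]
    · exact hgu
    · positivity
  set P : E n := mom n t with hP
  have hinner : ∀ i, (inner ℝ (u i) P : ℝ) = ∑ j : Fin n, u i j * ((t : ℕ) : ℝ) ^ (j : ℕ) :=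
    fun i => inner_mom (u i) t
  have haP : ∀ i : Fin (2 * n), ((inner ℝ (u i) P : ℝ)) ^ 2 ≤ M ^ 2 := by
    intro i
    have h1 : |(inner ℝ (u i) P : ℝ)| ≤ ‖u i‖ * ‖P‖ := abs_real_inner_le_norm _ _
    rw [hu i, one_mul] at h1
    calc ((inner ℝ (u i) P : ℝ)) ^ 2 = |(inner ℝ (u i) P : ℝ)| ^ 2 := (sq_abs _).symm
      _ ≤ M ^ 2 := by
          apply pow_le_pow_left₀ (abs_nonneg _)
          exact le_trans h1 (hMmom t)
  have key : ∀ i : Fin (2 * n), d ≤ ((inner ℝ (u i) P : ℝ)) ^ 2 := by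
    intro i
    have hprod : c₀ / N ≤ ((inner ℝ (u i) P : ℝ)) ^ 2 * M ^ (2 * (2 * n - 1)) := by
      have hsplit : ∏ k : Fin (2 * n), (∑ j : Fin n, u k j * ((t : ℕ) : ℝ) ^ (j : ℕ)) ^ 2
          = ((inner ℝ (u i) P : ℝ)) ^ 2 * ∏ k ∈ Finset.univ.erase i,
            (∑ j : Fin n, u k j * ((t : ℕ) : ℝ) ^ (j : ℕ)) ^ 2 := by
        rw [hinner i]
        exact (Finset.mul_prod_erase Finset.univ _ (Finset.mem_univ i)).symm
      have herase : ∏ k ∈ Finset.univ.erase i,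
          (∑ j : Fin n, u k j * ((t : ℕ) : ℝ) ^ (j : ℕ)) ^ 2 ≤ M ^ (2 * (2 * n - 1)) := by
        calc ∏ k ∈ Finset.univ.erase i, (∑ j : Fin n, u k j * ((t : ℕ) : ℝ) ^ (j : ℕ)) ^ 2
            ≤ ∏ _k ∈ Finset.univ.erase i, M ^ 2 := by
              apply Finset.prod_le_prod (fun k _ => sq_nonneg _)
              intro k _
              rw [← hinner k]
              exact haP k
          _ = (M ^ 2) ^ (2 * n - 1) := by
              rw [Finset.prod_const, Finset.card_erase_of_mem (Finset.mem_univ i),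
                Finset.card_univ, Fintype.card_fin]
          _ = M ^ (2 * (2 * n - 1)) := by rw [← pow_mul]
      calc c₀ / N ≤ _ := ht
        _ = ((inner ℝ (u i) P : ℝ)) ^ 2 * ∏ k ∈ Finset.univ.erase i,
            (∑ j : Fin n, u k j * ((t : ℕ) : ℝ) ^ (j : ℕ)) ^ 2 := hsplit
        _ ≤ ((inner ℝ (u i) P : ℝ)) ^ 2 * M ^ (2 * (2 * n - 1)) := by
            apply mul_le_mul_of_nonneg_left herase (sq_nonneg _)
    rw [hd]
    rw [div_le_iff₀ (by positivity)]
    exact hprod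
  have hP0 : P ≠ 0 := by
    intro h
    have : P ⟨0, hn⟩ = 1 := by simp [hP, mom]
    rw [h] at this
    simp at this
  have hPn : 0 < ‖P‖ := norm_pos_iff.mpr hP0
  refine ⟨‖P‖⁻¹ • P, ?_, ?_⟩
  · rw [norm_smul, norm_inv, norm_norm, inv_mul_cancel₀ hPn.ne']
  · intro i
    rw [real_inner_smul_right, abs_mul, abs_inv, abs_norm]
    have h1 : Real.sqrt d ≤ |(inner ℝ (u i) P : ℝ)| := by
      have := key i
      calc Real.sqrt d ≤ Real.sqrt (((inner ℝ (u i) P : ℝ)) ^ 2) :=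
          Real.sqrt_le_sqrt (key i)
        _ = |(inner ℝ (u i) P : ℝ)| := Real.sqrt_sq_eq_abs _
    have h2 : M⁻¹ ≤ ‖P‖⁻¹ := by
      apply inv_anti₀ hPn (hMmom t)
    calc Real.sqrt d / M = M⁻¹ * Real.sqrt d := by rw [div_eq_mul_inv, mul_comm]
      _ ≤ ‖P‖⁻¹ * |(inner ℝ (u i) P : ℝ)| := by
          apply mul_le_mul h2 h1 (Real.sqrt_nonneg _) (by positivity)
lemma projL_mem {n : ℕ} (V : Submodule ℝ (E n)) (v : E n) : projL V v ∈ V := by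
  exact SetLike.coe_mem (Submodule.orthogonalProjection V v)

lemma exists_unit_normal {n : ℕ} (hn : 0 < n) (X : Submodule ℝ (E n))
    (hX : Module.finrank ℝ X = n - 1) : ∃ w : E n, ‖w‖ = 1 ∧ w ∈ Xᗮ := by
  have hrank : Module.finrank ℝ X + Module.finrank ℝ Xᗮ = n := by
    rw [Submodule.finrank_add_finrank_orthogonal]
    simp
  have hne : Xᗮ ≠ ⊥ := by
    intro h
    rw [h, finrank_bot] at hrank
    omega
  obtain ⟨w₀, hw₀mem, hw₀⟩ := Submodule.exists_mem_ne_zero_of_ne_bot hne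
  have hw₀n : 0 < ‖w₀‖ := norm_pos_iff.mpr hw₀
  refine ⟨‖w₀‖⁻¹ • w₀, ?_, Submodule.smul_mem _ _ hw₀mem⟩
  rw [norm_smul, norm_inv, norm_norm, inv_mul_cancel₀ hw₀n.ne']

lemma inner_le_dist_sub {n : ℕ} (X : Submodule ℝ (E n)) (w v : E n)
    (hw : ‖w‖ = 1) (hwX : w ∈ Xᗮ) :
    |(inner ℝ w v : ℝ)| ≤ ‖v - projL X v‖ := by
  have h0 : (inner ℝ w (projL X v) : ℝ) = 0 := by
    have := Submodule.mem_orthogonal X w |>.mp hwX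
    rw [real_inner_comm]
    exact this _ (projL_mem X v)
  have : (inner ℝ w v : ℝ) = inner ℝ w (v - projL X v) := by
    rw [inner_sub_right, h0, sub_zero]
  rw [this]
  calc |(inner ℝ w (v - projL X v) : ℝ)| ≤ ‖w‖ * ‖v - projL X v‖ := abs_real_inner_le_norm _ _
    _ = ‖v - projL X v‖ := by rw [hw, one_mul]

lemma deltaLine_lower {n : ℕ} (v : E n) (X Y : Submodule ℝ (E n)) (hv : ‖v‖ = 1) :
    deltaLine v X - delta X Y ≤ deltaLine v Y := by
  have h1 : ‖v - projL X v‖ ≤ ‖v - projL Y v‖ + ‖projL Y v - projL X v‖ := by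
    calc ‖v - projL X v‖ = ‖(v - projL Y v) + (projL Y v - projL X v)‖ := by rw [sub_add_sub_cancel]
      _ ≤ _ := norm_add_le _ _
  have h2 : ‖projL Y v - projL X v‖ ≤ delta X Y := by
    calc ‖projL Y v - projL X v‖ = ‖(projL X - projL Y) v‖ := by
          rw [ContinuousLinearMap.sub_apply, norm_sub_rev]
      _ ≤ ‖projL X - projL Y‖ * ‖v‖ := ContinuousLinearMap.le_opNorm _ _
      _ = delta X Y := by rw [hv, mul_one]; rfl
  unfold deltaLine
  linarith

theorem stmt0 (n : ℕ) (hn : 0 < n) :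
    ∃ ε : ℚ, 0 < ε ∧ ε < 1 ∧
      ∀ X : Fin (2 * n) → Submodule ℝ (E n),
        (∀ i, Module.finrank ℝ (X i) = n - 1) →
        ∃ v : E n, ‖v‖ = 1 ∧
          ∀ Y : Fin (2 * n) → Submodule ℝ (E n),
            (∀ i, Module.finrank ℝ (Y i) = n - 1) →
            (∀ i, delta (X i) (Y i) < (ε : ℝ)) →
            ∀ i, deltaLine v (Y i) > (ε : ℝ) := by
  obtain ⟨c, hc, hcore⟩ := core n hn
  obtain ⟨ε, hε0, hε1⟩ := exists_rat_btwn (show (0:ℝ) < min 1 (c / 2) by positivity)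
  refine ⟨ε, by exact_mod_cast hε0, ?_, ?_⟩
  · have : (ε : ℝ) < 1 := lt_of_lt_of_le hε1 (min_le_left _ _)
    exact_mod_cast this
  · intro X hX
    have hw : ∀ i, ∃ w : E n, ‖w‖ = 1 ∧ w ∈ (X i)ᗮ :=
      fun i => exists_unit_normal hn (X i) (hX i)
    choose w hwnorm hwmem using hw
    obtain ⟨v, hv, hvc⟩ := hcore w hwnorm
    refine ⟨v, hv, ?_⟩
    intro Y _ hδ i
    have h1 : c ≤ deltaLine v (X i) :=
      le_trans (hvc i) (inner_le_dist_sub (X i) (w i) v (hwnorm i) (hwmem i))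
    have h2 : deltaLine v (X i) - delta (X i) (Y i) ≤ deltaLine v (Y i) :=
      deltaLine_lower v (X i) (Y i) hv
    have h3 : (ε : ℝ) < c / 2 := lt_of_lt_of_le hε1 (min_le_right _ _)
    have h4 := hδ i
    linarith
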